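/- Let F : ℝ^T × ℝ → [0,1] be measurable such that for each y ∈ ℝ^T, r ↦ F(y, r) is a cdf, and suppose there is φ : ℝ₊ → ℝ₊ with ∫_0^∞ φ(r) dr < ∞ such that 1 − F(y, r) ≤ φ(r) and F(y, −r) ≤ φ(r) for all y and r > 0. Define G_x(r) = ∫ F(x+z, r) p_σ(z) dz with p_σ the N(0, σ²I_T) density. Then for all x, δ ∈ ℝ^T, ∫_{-∞}^∞ |G_x(r) − G_{x+δ}(r)| dr ≤ (‖δ‖₂/σ) (∫_0^∞ φ(r) dr)(∫_{ℝ^T} ‖z‖₂ p(z) dz), where p is the standard Gaussian density on ℝ^T. -/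

import Mathlib

open MeasureTheory

/-- Density of `N(0, σ²I_T)` on `ℝ^T`. -/
noncomputable def gpdfs (T : ℕ) (σ : ℝ) (w : EuclideanSpace ℝ (Fin T)) : ℝ :=
  (2 * Real.pi * σ ^ 2) ^ (-(T : ℝ) / 2) * Real.exp (-‖w‖ ^ 2 / (2 * σ ^ 2))

/-- Density of the standard Gaussian `N(0, I_T)` on `ℝ^T`. -/
noncomputable def gpdf (T : ℕ) (z : EuclideanSpace ℝ (Fin T)) : ℝ :=
  (2 * Real.pi) ^ (-(T : ℝ) / 2) * Real.exp (-‖z‖ ^ 2 / 2)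

open scoped RealInnerProductSpace

section aux

variable {T : ℕ} {σ : ℝ}

lemma gpdfs_nonneg (hσ : 0 < σ) (z : EuclideanSpace ℝ (Fin T)) : 0 ≤ gpdfs T σ z := by
  unfold gpdfs
  positivity

lemma continuous_gpdfs : Continuous (gpdfs T σ) := by
  unfold gpdfs
  fun_prop

/-- integrability of a centered Gaussian-type function `exp (-b‖v‖²)` -/
lemma integrable_exp_neg_mul_sq_norm {b : ℝ} (hb : 0 < b) :
    Integrable (fun v : EuclideanSpace ℝ (Fin T) => Real.exp (-b * ‖v‖ ^ 2)) := by
  have h := (GaussianFourier.integrable_cexp_neg_mul_sq_norm_add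
      (V := EuclideanSpace ℝ (Fin T)) (b := (b : ℂ)) (by simpa using hb) 0 0).norm
  refine h.congr ?_
  filter_upwards with v
  rw [Complex.norm_exp]
  norm_num [← Complex.ofReal_pow]

lemma integrable_gpdfs (hσ : 0 < σ) : Integrable (gpdfs T σ) := by
  have hb : (0:ℝ) < 1 / (2 * σ ^ 2) := by positivity
  have h := (integrable_exp_neg_mul_sq_norm (T := T) hb).const_mul
      ((2 * Real.pi * σ ^ 2) ^ (-(T : ℝ) / 2))
  refine h.congr ?_
  filter_upwards with v
  unfold gpdfs
  congr 1
  ring_nf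

lemma integrable_norm_mul_gpdfs (hσ : 0 < σ) :
    Integrable (fun z : EuclideanSpace ℝ (Fin T) => ‖z‖ * gpdfs T σ z) := by
  have hb : (0:ℝ) < 1 / (2 * σ ^ 2) := by positivity
  set b : ℝ := 1 / (2 * σ ^ 2) with hbdef
  have h := (integrable_exp_neg_mul_sq_norm (T := T) (half_pos hb)).const_mul
      ((2 * Real.pi * σ ^ 2) ^ (-(T : ℝ) / 2) * (1 + 2 / b))
  refine Integrable.mono h ?_ ?_
  · exact (continuous_norm.mul continuous_gpdfs).aestronglyMeasurable
  · filter_upwards with z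
    have hC : (0:ℝ) ≤ (2 * Real.pi * σ ^ 2) ^ (-(T : ℝ) / 2) := by positivity
    have hb2 : (0:ℝ) < b := hb
    have key : ‖z‖ * Real.exp (-‖z‖ ^ 2 / (2 * σ ^ 2)) ≤
        (1 + 2 / b) * Real.exp (-(b / 2) * ‖z‖ ^ 2) := by
      have h1 : Real.exp (-‖z‖ ^ 2 / (2 * σ ^ 2)) =
          Real.exp (-(b/2) * ‖z‖ ^ 2) * Real.exp (-(b/2) * ‖z‖ ^ 2) := by
        rw [← Real.exp_add]; congr 1; rw [hbdef]; field_simp; ring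
      rw [h1, ← mul_assoc]
      have h2 : ‖z‖ * Real.exp (-(b/2) * ‖z‖ ^ 2) ≤ (1 + 2 / b) := by
        have he : 1 + (b/2) * ‖z‖ ^ 2 ≤ Real.exp ((b/2) * ‖z‖ ^ 2) := by
          have := Real.add_one_le_exp ((b/2) * ‖z‖ ^ 2); linarith
        have hepos : (0:ℝ) < Real.exp ((b/2) * ‖z‖ ^ 2) := Real.exp_pos _
        rw [show -(b/2) * ‖z‖^2 = -((b/2) * ‖z‖^2) by ring, Real.exp_neg]
        rw [mul_inv_le_iff₀ hepos]
        have hn : (0:ℝ) ≤ ‖z‖ := norm_nonneg _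
        have h2b : (0:ℝ) < 2 / b := by positivity
        have hexp : (1 + 2/b) * (1 + (b/2) * ‖z‖ ^ 2)
            = 1 + (b/2) * ‖z‖ ^ 2 + 2/b + ‖z‖ ^ 2 := by field_simp; ring
        have key2 : ‖z‖ ≤ 1 + ‖z‖ ^ 2 := by nlinarith [sq_nonneg (‖z‖ - 1)]
        have step1 : ‖z‖ ≤ (1 + 2 / b) * (1 + (b/2) * ‖z‖ ^ 2) := by
          rw [hexp]; nlinarith [mul_nonneg (le_of_lt hb2) (sq_nonneg ‖z‖)]
        refine step1.trans ?_
        have h1b : (0:ℝ) < 1 + 2 / b := by positivity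
        exact mul_le_mul_of_nonneg_left he h1b.le
      exact mul_le_mul_of_nonneg_right h2 (Real.exp_pos _).le
    have hgn : 0 ≤ gpdfs T σ z := gpdfs_nonneg hσ z
    rw [Real.norm_of_nonneg (mul_nonneg (norm_nonneg _) hgn),
        Real.norm_of_nonneg (by positivity)]
    show ‖z‖ * ((2 * Real.pi * σ ^ 2) ^ (-(T : ℝ) / 2) * Real.exp (-‖z‖ ^ 2 / (2 * σ ^ 2))) ≤ _
    calc ‖z‖ * ((2 * Real.pi * σ ^ 2) ^ (-(T : ℝ) / 2) * Real.exp (-‖z‖ ^ 2 / (2 * σ ^ 2)))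
        = (2 * Real.pi * σ ^ 2) ^ (-(T : ℝ) / 2) *
            (‖z‖ * Real.exp (-‖z‖ ^ 2 / (2 * σ ^ 2))) := by ring
      _ ≤ (2 * Real.pi * σ ^ 2) ^ (-(T : ℝ) / 2) *
            ((1 + 2 / b) * Real.exp (-(b / 2) * ‖z‖ ^ 2)) :=
          mul_le_mul_of_nonneg_left key hC
      _ = (2 * Real.pi * σ ^ 2) ^ (-(T : ℝ) / 2) * (1 + 2 / b) *
            Real.exp (-(b / 2) * ‖z‖ ^ 2) := by ring

end aux

section deriv
variable {T : ℕ} {σ : ℝ}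

lemma gpdfs_hasDerivAt (hσ : 0 < σ) (z δ : EuclideanSpace ℝ (Fin T)) (t : ℝ) :
    HasDerivAt (fun s : ℝ => gpdfs T σ (z - s • δ))
      ((⟪z - t • δ, δ⟫ / σ ^ 2) * gpdfs T σ (z - t • δ)) t := by
  have hnorm : ∀ s : ℝ, ‖z - s • δ‖ ^ 2 = ‖z‖ ^ 2 - 2 * ⟪z, δ⟫ * s + ‖δ‖ ^ 2 * s ^ 2 := by
    intro s
    rw [norm_sub_sq_real, real_inner_smul_right, norm_smul]
    simp [mul_pow, sq_abs]
    ring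
  have hfun : (fun s : ℝ => gpdfs T σ (z - s • δ)) = fun s : ℝ =>
      (2 * Real.pi * σ ^ 2) ^ (-(T : ℝ) / 2) *
        Real.exp (-(‖z‖ ^ 2 - 2 * ⟪z, δ⟫ * s + ‖δ‖ ^ 2 * s ^ 2) / (2 * σ ^ 2)) := by
    funext s; unfold gpdfs; rw [hnorm s]
  rw [hfun]
  have h1 : HasDerivAt (fun s : ℝ => ‖z‖ ^ 2 - 2 * ⟪z, δ⟫ * s + ‖δ‖ ^ 2 * s ^ 2)
      (-(2 * ⟪z, δ⟫) + ‖δ‖ ^ 2 * (2 * t)) t := by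
    have := ((hasDerivAt_id t).const_mul (2 * ⟪z, δ⟫)).const_sub (‖z‖ ^ 2)
    have h2 := (hasDerivAt_pow 2 t).const_mul (‖δ‖ ^ 2)
    exact (this.add h2).congr_deriv (by simp)
  have h3 := ((h1.neg.div_const (2 * σ ^ 2)).exp).const_mul
      ((2 * Real.pi * σ ^ 2) ^ (-(T : ℝ) / 2))
  refine h3.congr_deriv ?_
  symm
  simp only [Pi.neg_apply]
  unfold gpdfs
  rw [hnorm t, inner_sub_left, real_inner_smul_left, real_inner_self_eq_norm_sq]
  set A := ‖z‖ ^ 2 with hA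
  set B := (⟪z, δ⟫ : ℝ) with hB
  set C := ‖δ‖ ^ 2 with hC
  have hσ2 : (σ:ℝ) ^ 2 ≠ 0 := by positivity
  field_simp
  ring

lemma gpdfs_pointwise_tv (hσ : 0 < σ) (z δ : EuclideanSpace ℝ (Fin T)) :
    |gpdfs T σ z - gpdfs T σ (z - δ)| ≤
      ∫ t in (0:ℝ)..1, (‖δ‖ / σ ^ 2) * (‖z - t • δ‖ * gpdfs T σ (z - t • δ)) := by
  set g' : ℝ → ℝ := fun t => (⟪z - t • δ, δ⟫ / σ ^ 2) * gpdfs T σ (z - t • δ) with hg'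
  have hg'cont : Continuous g' := by
    apply Continuous.mul
    · apply Continuous.div_const
      exact (continuous_const.sub (continuous_id.smul continuous_const)).inner continuous_const
    · exact continuous_gpdfs.comp (continuous_const.sub (continuous_id.smul continuous_const))
  have hftc : ∫ t in (0:ℝ)..1, g' t = gpdfs T σ (z - δ) - gpdfs T σ z := by
    have := intervalIntegral.integral_eq_sub_of_hasDerivAt
      (f := fun s : ℝ => gpdfs T σ (z - s • δ)) (f' := g')
      (fun s _ => gpdfs_hasDerivAt hσ z δ s) (hg'cont.intervalIntegrable 0 1)
    simpa using this
  have habs : |gpdfs T σ z - gpdfs T σ (z - δ)| = |∫ t in (0:ℝ)..1, g' t| := by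
    rw [hftc, abs_sub_comm]
  rw [habs]
  have h1 : |∫ t in (0:ℝ)..1, g' t| ≤ ∫ t in (0:ℝ)..1, |g' t| :=
    intervalIntegral.abs_integral_le_integral_abs (by norm_num)
  refine h1.trans ?_
  apply intervalIntegral.integral_mono_on (by norm_num)
  · exact (hg'cont.abs).intervalIntegrable 0 1
  · refine Continuous.intervalIntegrable ?_ 0 1
    exact continuous_const.mul ((continuous_const.sub (continuous_id.smul continuous_const)).norm.mul
      (continuous_gpdfs.comp (continuous_const.sub (continuous_id.smul continuous_const))))
  · intro t _
    rw [hg', abs_mul, abs_div]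
    rw [abs_of_nonneg (gpdfs_nonneg hσ _), abs_of_nonneg (by positivity : (0:ℝ) ≤ σ ^ 2)]
    have := abs_real_inner_le_norm (z - t • δ) δ
    calc |⟪z - t • δ, δ⟫| / σ ^ 2 * gpdfs T σ (z - t • δ)
        ≤ ‖z - t • δ‖ * ‖δ‖ / σ ^ 2 * gpdfs T σ (z - t • δ) := by
          apply mul_le_mul_of_nonneg_right _ (gpdfs_nonneg hσ _)
          have hs : (0:ℝ) < σ ^ 2 := by positivity
          exact (div_le_div_iff_of_pos_right hs).mpr this
      _ = ‖δ‖ / σ ^ 2 * (‖z - t • δ‖ * gpdfs T σ (z - t • δ)) := by ring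

end deriv

section scaling
variable {T : ℕ} {σ : ℝ}

lemma integral_norm_gpdfs_eq (hσ : 0 < σ) :
    ∫ z : EuclideanSpace ℝ (Fin T), ‖z‖ * gpdfs T σ z = σ * ∫ w, ‖w‖ * gpdf T w := by
  have h := MeasureTheory.Measure.integral_comp_smul (μ := volume)
      (f := fun z : EuclideanSpace ℝ (Fin T) => ‖z‖ * gpdfs T σ z) σ
  have hrank : Module.finrank ℝ (EuclideanSpace ℝ (Fin T)) = T := by
    simp [finrank_euclideanSpace]
  rw [hrank] at h
  have hσT : (0:ℝ) < σ ^ T := by positivity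
  have habs : |((σ:ℝ) ^ T)⁻¹| = (σ ^ T)⁻¹ := abs_of_pos (by positivity)
  rw [habs] at h
  -- h : ∫ x, f (σ • x) = (σ^T)⁻¹ • ∫ x, f x
  have hpt : ∀ w : EuclideanSpace ℝ (Fin T),
      ‖σ • w‖ * gpdfs T σ (σ • w) = σ * (σ ^ T)⁻¹ * (‖w‖ * gpdf T w) := by
    intro w
    have hns : ‖σ • w‖ = σ * ‖w‖ := by
      rw [norm_smul, Real.norm_of_nonneg hσ.le]
    have hexp : Real.exp (-‖σ • w‖ ^ 2 / (2 * σ ^ 2)) = Real.exp (-‖w‖ ^ 2 / 2) := by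
      congr 1
      rw [hns]
      field_simp
    have hconst : (2 * Real.pi * σ ^ 2) ^ (-(T : ℝ) / 2)
        = (σ ^ T)⁻¹ * (2 * Real.pi) ^ (-(T : ℝ) / 2) := by
      have h2π : (0:ℝ) ≤ 2 * Real.pi := by positivity
      rw [Real.mul_rpow h2π (by positivity)]
      have : ((σ:ℝ) ^ 2) ^ (-(T : ℝ) / 2) = (σ ^ T)⁻¹ := by
        rw [← Real.rpow_natCast σ 2, ← Real.rpow_mul hσ.le]
        rw [show ((2:ℕ):ℝ) * (-(T : ℝ) / 2) = -(T:ℝ) by push_cast; ring]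
        rw [Real.rpow_neg hσ.le, Real.rpow_natCast]
      rw [this]
      ring
    unfold gpdfs gpdf
    rw [hexp, hns, hconst]
    ring
  have h2 : ∫ x : EuclideanSpace ℝ (Fin T), ‖σ • x‖ * gpdfs T σ (σ • x)
      = σ * (σ ^ T)⁻¹ * ∫ w, ‖w‖ * gpdf T w := by
    simp_rw [hpt]
    rw [MeasureTheory.integral_const_mul]
  rw [h2] at h
  -- h : σ * (σ^T)⁻¹ * ∫ gpdf-part = (σ^T)⁻¹ • ∫ f
  have hne : ((σ:ℝ) ^ T)⁻¹ ≠ 0 := by positivity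
  rw [smul_eq_mul] at h
  field_simp at h
  -- hopefully h now gives the result
  nlinarith [h]

end scaling

section tv
variable {T : ℕ} {σ : ℝ}

lemma gpdfs_tv_bound (hσ : 0 < σ) (δ : EuclideanSpace ℝ (Fin T)) :
    ∫ z : EuclideanSpace ℝ (Fin T), |gpdfs T σ z - gpdfs T σ (z - δ)| ≤
      (‖δ‖ / σ) * ∫ w, ‖w‖ * gpdf T w := by
  have hint : Integrable (fun z : EuclideanSpace ℝ (Fin T) => ‖z‖ * gpdfs T σ z) :=
    integrable_norm_mul_gpdfs hσ
  have hΔint : Integrable (fun z : EuclideanSpace ℝ (Fin T) =>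
      |gpdfs T σ z - gpdfs T σ (z - δ)|) :=
    ((integrable_gpdfs hσ).sub ((integrable_gpdfs hσ).comp_sub_right δ)).abs
  set c : ℝ := ‖δ‖ / σ ^ 2 with hc
  have hc0 : 0 ≤ c := by positivity
  set ν : Measure ℝ := volume.restrict (Set.Ioc (0:ℝ) 1) with hν
  set q : ℝ → EuclideanSpace ℝ (Fin T) → ℝ :=
    fun t z => c * (‖z - t • δ‖ * gpdfs T σ (z - t • δ)) with hq
  have hqc : Continuous (Function.uncurry q) := by
    have h1 : Continuous (fun p : ℝ × EuclideanSpace ℝ (Fin T) => p.2 - p.1 • δ) :=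
      continuous_snd.sub (continuous_fst.smul continuous_const)
    exact continuous_const.mul ((h1.norm).mul (continuous_gpdfs.comp h1))
  have hslice : ∀ t : ℝ, Integrable (fun z => q t z) volume := by
    intro t
    exact (hint.comp_sub_right (t • δ)).const_mul c
  have hqnn : ∀ t z, 0 ≤ q t z := by
    intro t z
    exact mul_nonneg hc0 (mul_nonneg (norm_nonneg _) (gpdfs_nonneg hσ _))
  have hsliceint : ∀ t : ℝ, ∫ z, q t z = c * ∫ z, ‖z‖ * gpdfs T σ z := by
    intro t
    rw [hq]
    simp only
    rw [MeasureTheory.integral_const_mul]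
    congr 1
    exact integral_sub_right_eq_self (fun z => ‖z‖ * gpdfs T σ z) (t • δ)
  have hq_int : Integrable (Function.uncurry q) (ν.prod volume) := by
    rw [MeasureTheory.integrable_prod_iff hqc.aestronglyMeasurable]
    constructor
    · exact Filter.Eventually.of_forall fun t => hslice t
    · have : (fun t => ∫ z, ‖Function.uncurry q (t, z)‖) =
          fun _ => c * ∫ z, ‖z‖ * gpdfs T σ z := by
        funext t
        have : (fun z => ‖Function.uncurry q (t, z)‖) = fun z => q t z := by
          funext z
          exact Real.norm_of_nonneg (hqnn t z)
        rw [this, hsliceint t]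
      rw [this]
      refine MeasureTheory.integrableOn_const ?_
      simp [Real.volume_Ioc]
  have hpt : ∀ z, |gpdfs T σ z - gpdfs T σ (z - δ)| ≤ ∫ t, q t z ∂ν := by
    intro z
    have h := gpdfs_pointwise_tv hσ z δ
    rwa [intervalIntegral.integral_of_le (by norm_num : (0:ℝ) ≤ 1)] at h
  have hmarg : Integrable (fun z => ∫ t, q t z ∂ν) volume := by
    have := hq_int.integral_prod_right
    simpa [Function.uncurry] using this
  have h1 : ∫ z : EuclideanSpace ℝ (Fin T), |gpdfs T σ z - gpdfs T σ (z - δ)| ≤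
      ∫ z, (∫ t, q t z ∂ν) := integral_mono hΔint hmarg hpt
  have hswap : ∫ z, (∫ t, q t z ∂ν) = ∫ t, (∫ z, q t z) ∂ν := by
    exact (MeasureTheory.integral_integral_swap hq_int).symm
  have h2 : ∫ t, (∫ z, q t z) ∂ν = c * ∫ z, ‖z‖ * gpdfs T σ z := by
    simp_rw [hsliceint]
    rw [MeasureTheory.integral_const]
    simp [hν, Real.volume_Ioc]
  have h3 : c * ∫ z, ‖z‖ * gpdfs T σ z = (‖δ‖ / σ) * ∫ w, ‖w‖ * gpdf T w := by
    rw [integral_norm_gpdfs_eq hσ, hc]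
    have : (σ:ℝ) ≠ 0 := hσ.ne'
    field_simp
  calc ∫ z : EuclideanSpace ℝ (Fin T), |gpdfs T σ z - gpdfs T σ (z - δ)|
      ≤ ∫ z, (∫ t, q t z ∂ν) := h1
    _ = ∫ t, (∫ z, q t z) ∂ν := hswap
    _ = c * ∫ z, ‖z‖ * gpdfs T σ z := h2
    _ = (‖δ‖ / σ) * ∫ w, ‖w‖ * gpdf T w := h3

end tv

section half

lemma half_tv_bound {α : Type*} [MeasurableSpace α] {μ : Measure α}
    {A B u : α → ℝ} {c : ℝ} (hA : Integrable A μ) (hB : Integrable B μ)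
    (hAB : ∫ z, A z ∂μ = ∫ z, B z ∂μ)
    (hu_meas : AEStronglyMeasurable u μ) (hu0 : ∀ z, 0 ≤ u z) (huc : ∀ z, u z ≤ c) :
    |(∫ z, u z * A z ∂μ) - ∫ z, u z * B z ∂μ| ≤ c / 2 * ∫ z, |A z - B z| ∂μ := by
  have hD : Integrable (fun z => A z - B z) μ := hA.sub hB
  have hD0 : ∫ z, (A z - B z) ∂μ = 0 := by
    rw [integral_sub hA hB, hAB, sub_self]
  have hub : ∃ C, ∀ z, ‖u z‖ ≤ C := ⟨c, fun z => by
    rw [Real.norm_of_nonneg (hu0 z)]; exact huc z⟩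
  have huA : Integrable (fun z => u z * A z) μ := hA.bdd_mul hu_meas (ae_of_all _ hub.choose_spec)
  have huB : Integrable (fun z => u z * B z) μ := hB.bdd_mul hu_meas (ae_of_all _ hub.choose_spec)
  have huD : Integrable (fun z => u z * (A z - B z)) μ := hD.bdd_mul hu_meas (ae_of_all _ hub.choose_spec)
  have hsub : (∫ z, u z * A z ∂μ) - ∫ z, u z * B z ∂μ = ∫ z, u z * (A z - B z) ∂μ := by
    rw [← integral_sub huA huB]
    congr 1; funext z; ring
  rw [hsub]
  have habs : Integrable (fun z => |A z - B z|) μ := hD.abs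
  have hup : ∫ z, u z * (A z - B z) ∂μ ≤ c / 2 * ∫ z, |A z - B z| ∂μ := by
    have hmono : ∫ z, u z * (A z - B z) ∂μ ≤
        ∫ z, c / 2 * (|A z - B z| + (A z - B z)) ∂μ := by
      refine integral_mono huD ((habs.add hD).const_mul (c/2)) ?_
      intro z
      simp only
      rcases le_or_gt 0 (A z - B z) with h | h
      · rw [abs_of_nonneg h]
        nlinarith [hu0 z, huc z]
      · rw [abs_of_neg h]
        nlinarith [hu0 z, huc z]
    calc ∫ z, u z * (A z - B z) ∂μ
        ≤ ∫ z, c / 2 * (|A z - B z| + (A z - B z)) ∂μ := hmono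
      _ = c / 2 * ((∫ z, |A z - B z| ∂μ) + ∫ z, (A z - B z) ∂μ) := by
          rw [MeasureTheory.integral_const_mul, integral_add habs hD]
      _ = c / 2 * ∫ z, |A z - B z| ∂μ := by rw [hD0]; ring
  have hlow : -(c / 2 * ∫ z, |A z - B z| ∂μ) ≤ ∫ z, u z * (A z - B z) ∂μ := by
    have hmono : ∫ z, c / 2 * (-(|A z - B z|) + (A z - B z)) ∂μ ≤
        ∫ z, u z * (A z - B z) ∂μ := by
      refine integral_mono ((habs.neg.add hD).const_mul (c/2)) huD ?_
      intro z
      simp only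
      rcases le_or_gt 0 (A z - B z) with h | h
      · rw [abs_of_nonneg h]
        nlinarith [hu0 z, huc z]
      · rw [abs_of_neg h]
        nlinarith [hu0 z, huc z]
    have heq : ∫ z, c / 2 * (-(|A z - B z|) + (A z - B z)) ∂μ
        = -(c / 2 * ∫ z, |A z - B z| ∂μ) := by
      rw [MeasureTheory.integral_const_mul]
      have : ∫ z, (-(|A z - B z|) + (A z - B z)) ∂μ
          = (∫ z, -(|A z - B z|) ∂μ) + ∫ z, (A z - B z) ∂μ := integral_add habs.neg hD
      rw [this, integral_neg, hD0]
      ring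
    linarith [hmono, heq.symm.le, heq.le]
  exact abs_le.mpr ⟨by linarith, hup⟩

end half

/-- for a measurable family of cdfs `F(y, ·)` with integrable tail envelope `φ`,
the Gaussian-smoothed cdfs `G_x(r) = ∫ F(x+z, r) p_σ(z) dz` satisfy
`∫ |G_x(r) − G_{x+δ}(r)| dr ≤ (‖δ‖₂/σ)(∫_0^∞ φ)(∫ ‖z‖ p(z) dz)`. -/
theorem stmt_13 (T : ℕ) (σ : ℝ) (hσ : 0 < σ)
    (F : EuclideanSpace ℝ (Fin T) → ℝ → ℝ)
    (hmeas : Measurable (Function.uncurry F))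
    (hmono : ∀ y, Monotone (F y))
    (hrc : ∀ y r, ContinuousWithinAt (F y) (Set.Ici r) r)
    (hrange : ∀ y r, F y r ∈ Set.Icc (0:ℝ) 1)
    (hbot : ∀ y, Filter.Tendsto (F y) Filter.atBot (nhds 0))
    (htop : ∀ y, Filter.Tendsto (F y) Filter.atTop (nhds 1))
    (φ : ℝ → ℝ) (hφpos : ∀ r, 0 ≤ φ r) (hφint : IntegrableOn φ (Set.Ioi 0))
    (htail : ∀ y, ∀ r : ℝ, 0 < r → 1 - F y r ≤ φ r ∧ F y (-r) ≤ φ r)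
    (x δ : EuclideanSpace ℝ (Fin T)) :
    ∫ r : ℝ, |(∫ z, F (x + z) r * gpdfs T σ z) - ∫ z, F (x + δ + z) r * gpdfs T σ z| ≤
      (‖δ‖ / σ) * (∫ r in Set.Ioi (0:ℝ), φ r) * ∫ z, ‖z‖ * gpdf T z := by
  have hpint : Integrable (gpdfs T σ) := integrable_gpdfs hσ
  have hpδint : Integrable (fun z : EuclideanSpace ℝ (Fin T) => gpdfs T σ (z - δ)) :=
    hpint.comp_sub_right δ
  set I : ℝ := ∫ z : EuclideanSpace ℝ (Fin T), |gpdfs T σ z - gpdfs T σ (z - δ)| with hIdef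
  have hI0 : 0 ≤ I := integral_nonneg fun z => abs_nonneg _
  set Φ : ℝ := ∫ r in Set.Ioi (0:ℝ), φ r with hΦdef
  have hΦ0 : 0 ≤ Φ := setIntegral_nonneg measurableSet_Ioi fun r _ => hφpos r
  set M : ℝ := ∫ z : EuclideanSpace ℝ (Fin T), ‖z‖ * gpdf T z with hMdef
  have hM0 : 0 ≤ M := by
    refine integral_nonneg fun z => mul_nonneg (norm_nonneg _) ?_
    unfold gpdf; positivity
  have hItv : I ≤ (‖δ‖ / σ) * M := gpdfs_tv_bound hσ δ
  -- measurability of slices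
  have hFz : ∀ (y : EuclideanSpace ℝ (Fin T)) (r : ℝ),
      AEStronglyMeasurable (fun z => F (y + z) r) (volume : Measure (EuclideanSpace ℝ (Fin T))) := by
    intro y r
    exact (hmeas.comp ((measurable_id.const_add y).prodMk measurable_const)).aestronglyMeasurable
  have hFbdd : ∀ (y : EuclideanSpace ℝ (Fin T)) (r : ℝ), ∃ C, ∀ z, ‖F (y + z) r‖ ≤ C := by
    intro y r
    refine ⟨1, fun z => ?_⟩
    rw [Real.norm_eq_abs, abs_le]
    have h := hrange (y + z) r
    exact ⟨by linarith [h.1], h.2⟩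
  have hFpA : ∀ r : ℝ, Integrable (fun z => F (x + z) r * gpdfs T σ z) :=
    fun r => hpint.bdd_mul (hFz x r) (ae_of_all _ (hFbdd x r).choose_spec)
  have hFpB : ∀ r : ℝ, Integrable (fun z => F (x + z) r * gpdfs T σ (z - δ)) :=
    fun r => hpδint.bdd_mul (hFz x r) (ae_of_all _ (hFbdd x r).choose_spec)
  have hpI : ∫ z : EuclideanSpace ℝ (Fin T), gpdfs T σ (z - δ) = ∫ z, gpdfs T σ z :=
    integral_sub_right_eq_self (gpdfs T σ) δ
  -- translation rewriting
  have htrans : ∀ r : ℝ, ∫ z, F (x + δ + z) r * gpdfs T σ z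
      = ∫ z, F (x + z) r * gpdfs T σ (z - δ) := by
    intro r
    calc ∫ z, F (x + δ + z) r * gpdfs T σ z
        = ∫ z, F (x + δ + (z - δ)) r * gpdfs T σ (z - δ) :=
          (integral_sub_right_eq_self (fun z => F (x + δ + z) r * gpdfs T σ z) δ).symm
      _ = ∫ z, F (x + z) r * gpdfs T σ (z - δ) := by
          congr 1; funext z
          congr 2
          abel
  have hIflip : ∫ z : EuclideanSpace ℝ (Fin T), |gpdfs T σ (z - δ) - gpdfs T σ z| = I := by
    rw [hIdef]
    congr 1; funext z; rw [abs_sub_comm]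
  -- key pointwise (in r) bound
  have hkey : ∀ r : ℝ, r ≠ 0 →
      |(∫ z, F (x + z) r * gpdfs T σ z) - ∫ z, F (x + δ + z) r * gpdfs T σ z|
        ≤ φ |r| * (I / 2) := by
    intro r hr
    rw [htrans r]
    rcases lt_or_gt_of_ne hr with hneg | hpos
    · -- r < 0 : use u z = F (x+z) r directly
      have hu0 : ∀ z, 0 ≤ F (x + z) r := fun z => (hrange (x + z) r).1
      have huc : ∀ z, F (x + z) r ≤ φ (-r) := by
        intro z
        have := (htail (x + z) (-r) (by linarith)).2
        rwa [neg_neg] at this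
      have h := half_tv_bound (μ := (volume : Measure (EuclideanSpace ℝ (Fin T))))
        (A := gpdfs T σ) (B := fun z => gpdfs T σ (z - δ)) (u := fun z => F (x + z) r)
        hpint hpδint hpI.symm (hFz x r) hu0 huc
      rw [abs_of_neg hneg]
      calc |(∫ z, F (x + z) r * gpdfs T σ z) - ∫ z, F (x + z) r * gpdfs T σ (z - δ)|
          ≤ φ (-r) / 2 * ∫ z, |gpdfs T σ z - gpdfs T σ (z - δ)| := h
        _ = φ (-r) * (I / 2) := by rw [← hIdef]; ring
    · -- r > 0 : use u z = 1 - F (x+z) r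
      have hu0 : ∀ z, 0 ≤ 1 - F (x + z) r := fun z => by linarith [(hrange (x + z) r).2]
      have huc : ∀ z, 1 - F (x + z) r ≤ φ r := fun z => (htail (x + z) r hpos).1
      have humeas : AEStronglyMeasurable (fun z : EuclideanSpace ℝ (Fin T) => 1 - F (x + z) r)
          (volume : Measure (EuclideanSpace ℝ (Fin T))) :=
        aestronglyMeasurable_const.sub (hFz x r)
      have h := half_tv_bound (μ := (volume : Measure (EuclideanSpace ℝ (Fin T))))
        (A := fun z => gpdfs T σ (z - δ)) (B := gpdfs T σ) (u := fun z => 1 - F (x + z) r)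
        hpδint hpint hpI humeas hu0 huc
      -- rewrite |diff| in terms of u
      have huA : ∫ z, (1 - F (x + z) r) * gpdfs T σ (z - δ)
          = (∫ z, gpdfs T σ (z - δ)) - ∫ z, F (x + z) r * gpdfs T σ (z - δ) := by
        rw [← integral_sub hpδint (hFpB r)]
        congr 1; funext z; ring
      have huB : ∫ z, (1 - F (x + z) r) * gpdfs T σ z
          = (∫ z, gpdfs T σ z) - ∫ z, F (x + z) r * gpdfs T σ z := by
        rw [← integral_sub hpint (hFpA r)]
        congr 1; funext z; ring
      rw [huA, huB, hpI] at h
      have heq : ((∫ z, gpdfs T σ z) - ∫ z, F (x + z) r * gpdfs T σ (z - δ))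
              - ((∫ z, gpdfs T σ z) - ∫ z, F (x + z) r * gpdfs T σ z)
          = (∫ z, F (x + z) r * gpdfs T σ z) - ∫ z, F (x + z) r * gpdfs T σ (z - δ) := by
        ring
      rw [heq] at h
      rw [abs_of_pos hpos]
      calc |(∫ z, F (x + z) r * gpdfs T σ z) - ∫ z, F (x + z) r * gpdfs T σ (z - δ)|
          ≤ φ r / 2 * ∫ z, |gpdfs T σ (z - δ) - gpdfs T σ z| := h
        _ = φ r * (I / 2) := by rw [hIflip]; ring
  -- integrability of the envelope r ↦ φ |r|
  have hφIoi : IntegrableOn (fun r => φ |r|) (Set.Ioi (0:ℝ)) :=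
    hφint.congr_fun (fun r hr => by rw [abs_of_pos hr]) measurableSet_Ioi
  have hφIic : IntegrableOn (fun r => φ |r|) (Set.Iic (0:ℝ)) := by
    unfold IntegrableOn
    rw [← Measure.map_neg_eq_self (volume : Measure ℝ)]
    have m : MeasurableEmbedding fun r : ℝ => -r :=
      (Homeomorph.neg ℝ).measurableEmbedding
    rw [Measure.restrict_map m.measurable measurableSet_Iic,
      m.integrable_map_iff]
    have hpre : (fun r : ℝ => -r) ⁻¹' Set.Iic 0 = Set.Ici 0 := by ext r; simp
    rw [hpre]
    have hcomp : ((fun r : ℝ => φ |r|) ∘ fun r => -r) = fun r => φ |r| := by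
      funext r; simp [abs_neg]
    rw [hcomp]
    exact Iff.mpr integrableOn_Ici_iff_integrableOn_Ioi hφIoi
  have hφabs : Integrable (fun r => φ |r|) (volume : Measure ℝ) := by
    have := hφIic.union hφIoi
    rwa [Set.Iic_union_Ioi, integrableOn_univ] at this
  have hφabsint : ∫ r : ℝ, φ |r| = 2 * Φ := integral_comp_abs
  -- final assembly
  have hmain : ∫ r : ℝ, |(∫ z, F (x + z) r * gpdfs T σ z)
      - ∫ z, F (x + δ + z) r * gpdfs T σ z| ≤ ∫ r : ℝ, φ |r| * (I / 2) := by
    refine integral_mono_of_nonneg (Filter.Eventually.of_forall fun r => abs_nonneg _)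
      (hφabs.mul_const (I / 2)) ?_
    have h0 : ∀ᵐ r : ℝ, r ≠ 0 := by
      refine ae_iff.mpr ?_
      simp [show {a : ℝ | ¬ a ≠ 0} = {0} by ext a; simp]
    filter_upwards [h0] with r hr
    exact hkey r hr
  have hval : ∫ r : ℝ, φ |r| * (I / 2) = I * Φ := by
    rw [MeasureTheory.integral_mul_const, hφabsint]
    ring
  calc ∫ r : ℝ, |(∫ z, F (x + z) r * gpdfs T σ z) - ∫ z, F (x + δ + z) r * gpdfs T σ z|
      ≤ ∫ r : ℝ, φ |r| * (I / 2) := hmain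
    _ = I * Φ := hval
    _ ≤ ((‖δ‖ / σ) * M) * Φ := mul_le_mul_of_nonneg_right hItv hΦ0
    _ = (‖δ‖ / σ) * Φ * M := by ring
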